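/- Let f : [0,∞) → [0,∞) be convex and nondecreasing with f(0) = 0, let α ≥ 1, and let p : ℕ → [0,∞) be a nondecreasing pricing function such that f*(p(y)) < ∞ for every integer y ≥ 0 and such that for every integer y ≥ 0: p(y) − (f(y+1) − f(y)) ≥ (1/α)·(f*(p(y+1)) − f*(p(y))). Then for every run of the posted-price mechanism M_p on any sequence of buyers, and for every fractional allocation x, the welfare W of M_p satisfies W ≥ (1/α)·(welfare of x) − (m/α)·f*(p(0)). -/

import Mathlib

open Finset

/-- Convex conjugate of `f` restricted to `[0, ∞)`: `f*(q) = sup_{z ≥ 0} (q·z − f(z))`. -/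
noncomputable def conj (f : ℝ → ℝ) (q : ℝ) : ℝ :=
  sSup ((fun z => q * z - f z) '' Set.Ici 0)

/-- Number of units of item `j` sold to the buyers arriving strictly before time `i`,
under the allocation `S`. -/
def soldCount {m n : ℕ} (S : Fin n → Finset (Fin m)) (j : Fin m) (i : ℕ) : ℕ :=
  (Finset.univ.filter (fun i' : Fin n => (i' : ℕ) < i ∧ j ∈ S i')).card

/-- Predicate: some buyer arriving at (natural) time `k` buys item `j`. -/
def buysP {m n : ℕ} (S : Fin n → Finset (Fin m)) (j : Fin m) (k : ℕ) : Prop :=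
  ∃ i' : Fin n, (i' : ℕ) = k ∧ j ∈ S i'

instance {m n : ℕ} (S : Fin n → Finset (Fin m)) (j : Fin m) :
    DecidablePred (buysP S j) :=
  fun k => decidable_of_iff (∃ i' : Fin n, (i' : ℕ) = k ∧ j ∈ S i') Iff.rfl

lemma sum_price_filter (p : ℕ → ℝ) (b : ℕ → Prop) [DecidablePred b] (n : ℕ) :
    ∑ k ∈ (range n).filter b, p (((range k).filter b).card)
      = ∑ y ∈ range (((range n).filter b).card), p y := by
  induction n with
  | zero => simp
  | succ n ih =>
    rw [range_add_one, filter_insert]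
    by_cases h : b n
    · rw [if_pos h, sum_insert (by simp), card_insert_of_notMem (by simp),
        sum_range_succ, ih]
      ring
    · rw [if_neg h, ih]

lemma soldCount_eq_card {m n : ℕ} (S : Fin n → Finset (Fin m)) (j : Fin m) (i : ℕ) :
    soldCount S j i = ((range i).filter (buysP S j)).card := by
  unfold soldCount
  refine Finset.card_bij (fun i' _ => (i' : ℕ)) ?_ ?_ ?_
  · intro a ha
    simp only [mem_filter, mem_univ, true_and] at ha
    simp only [mem_filter, mem_range]
    exact ⟨ha.1, a, rfl, ha.2⟩
  · intro a _ b _ hab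
    exact Fin.val_injective hab
  · intro k hk
    simp only [mem_filter, mem_range] at hk
    obtain ⟨hki, i', hval, hS⟩ := hk
    refine ⟨i', ?_, hval⟩
    simp only [mem_filter, mem_univ, true_and]
    exact ⟨hval ▸ hki, hS⟩

lemma revenue_item {m n : ℕ} (S : Fin n → Finset (Fin m)) (p : ℕ → ℝ) (j : Fin m) :
    ∑ i : Fin n, (if j ∈ S i then p (soldCount S j i) else 0)
      = ∑ y ∈ range (soldCount S j n), p y := by
  rw [soldCount_eq_card S j n, ← sum_price_filter p (buysP S j) n, sum_filter]
  rw [← Fin.sum_univ_eq_sum_range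
      (fun k => if buysP S j k then p (((range k).filter (buysP S j)).card) else 0) n]
  apply Finset.sum_congr rfl
  intro i _
  by_cases h : j ∈ S i
  · rw [if_pos h, if_pos ⟨i, rfl, h⟩, soldCount_eq_card]
  · rw [if_neg h, if_neg (by rintro ⟨i', hv, hS⟩; exact h (Fin.val_injective hv ▸ hS))]

lemma telescope_ineq (f : ℝ → ℝ) (α : ℝ) (p : ℕ → ℝ) (hf0 : f 0 = 0)
    (hkey : ∀ y : ℕ,
      p y - (f ((y : ℝ) + 1) - f (y : ℝ)) ≥ (1/α) * (conj f (p (y+1)) - conj f (p y)))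
    (Y : ℕ) :
    ∑ y ∈ range Y, p y - f (Y : ℝ) ≥ (1/α) * (conj f (p Y) - conj f (p 0)) := by
  induction Y with
  | zero => simp [hf0]
  | succ Y ih =>
    have h := hkey Y
    rw [sum_range_succ]
    push_cast
    linarith

/-- if a nondecreasing pricing function `p` satisfies the key discrete
differential inequality for a convex, nondecreasing production cost `f` with `f(0)=0`,
then every run of the posted-price mechanism `M_p` is `α`-competitive against every
fractional allocation, up to the additive constant `(m/α)·f*(p 0)`. -/
theorem stmt0 (m n : ℕ) (f : ℝ → ℝ) (α : ℝ) (p : ℕ → ℝ)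
    (hf0 : f 0 = 0)
    (hfnn : ∀ y ≥ (0:ℝ), 0 ≤ f y)
    (hfconv : ConvexOn ℝ (Set.Ici 0) f)
    (hfmono : MonotoneOn f (Set.Ici 0))
    (hα : 1 ≤ α)
    (hpnn : ∀ y : ℕ, 0 ≤ p y)
    (hpmono : Monotone p)
    (hbdd : ∀ y : ℕ, BddAbove ((fun z => p y * z - f z) '' Set.Ici 0))
    (hkey : ∀ y : ℕ,
      p y - (f ((y : ℝ) + 1) - f (y : ℝ)) ≥ (1/α) * (conj f (p (y+1)) - conj f (p y)))
    (v : Fin n → Finset (Fin m) → ℝ)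
    (hv0 : ∀ i, v i ∅ = 0)
    (hvnn : ∀ i T, 0 ≤ v i T)
    (S : Fin n → Finset (Fin m))
    (hrun : ∀ i : Fin n, ∀ T : Finset (Fin m),
      v i (S i) - ∑ j ∈ S i, p (soldCount S j i) ≥
        v i T - ∑ j ∈ T, p (soldCount S j i))
    (x : Fin n → Finset (Fin m) → ℝ)
    (hxnn : ∀ i T, 0 ≤ x i T)
    (hxle : ∀ i, ∑ T : Finset (Fin m), x i T ≤ 1) :
    (∑ i, v i (S i)) - ∑ j, f (soldCount S j n) ≥
      (1/α) * ((∑ i, ∑ T : Finset (Fin m), v i T * x i T) -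
          ∑ j, f (∑ i, ∑ T ∈ Finset.univ.filter (fun T : Finset (Fin m) => j ∈ T), x i T))
        - ((m : ℝ)/α) * conj f (p 0) := by
  classical
  have hα0 : (0:ℝ) < α := lt_of_lt_of_le one_pos hα
  have hαinv : (0:ℝ) < 1/α := by positivity
  have hαinv1 : 1/α ≤ 1 := by rw [div_le_one hα0]; exact hα
  set Y : Fin m → ℕ := fun j => soldCount S j n with hYdef
  set q : Fin m → ℝ :=
    fun j => ∑ i, ∑ T ∈ Finset.univ.filter (fun T : Finset (Fin m) => j ∈ T), x i T with hqdef
  have hYj : ∀ j, soldCount S j n = Y j := fun _ => rfl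
  have hqj : ∀ j,
      (∑ i, ∑ T ∈ Finset.univ.filter (fun T : Finset (Fin m) => j ∈ T), x i T) = q j :=
    fun _ => rfl
  simp only [hYj, hqj]
  have hq0 : ∀ j, 0 ≤ q j :=
    fun j => sum_nonneg fun i _ => sum_nonneg fun T _ => hxnn i T
  set U : Fin n → ℝ := fun i => v i (S i) - ∑ j ∈ S i, p (soldCount S j i) with hUdef
  -- utilities are nonnegative
  have hU0 : ∀ i, 0 ≤ U i := by
    intro i
    have h := hrun i ∅
    simp only [hv0, sum_empty, sub_zero] at h
    exact h
  have hsold_le : ∀ (j : Fin m) (i : Fin n), soldCount S j i ≤ Y j := by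
    intro j i
    apply Finset.card_le_card
    intro a ha
    simp only [mem_filter, mem_univ, true_and] at ha ⊢
    exact ⟨a.isLt, ha.2⟩
  have hUT : ∀ (i : Fin n) (T : Finset (Fin m)), U i ≥ v i T - ∑ j ∈ T, p (Y j) := by
    intro i T
    have h1 := hrun i T
    have h2 : ∑ j ∈ T, p (soldCount S j i) ≤ ∑ j ∈ T, p (Y j) :=
      sum_le_sum fun j _ => hpmono (hsold_le j i)
    simp only [hUdef]
    linarith
  have hUi : ∀ i : Fin n,
      (1/α) * (∑ T : Finset (Fin m), x i T * (v i T - ∑ j ∈ T, p (Y j))) ≤ U i := by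
    intro i
    have h1 : ∑ T : Finset (Fin m), x i T * (v i T - ∑ j ∈ T, p (Y j)) ≤ U i := by
      calc ∑ T : Finset (Fin m), x i T * (v i T - ∑ j ∈ T, p (Y j))
          ≤ ∑ T : Finset (Fin m), x i T * U i :=
            sum_le_sum fun T _ => mul_le_mul_of_nonneg_left (hUT i T) (hxnn i T)
        _ = (∑ T : Finset (Fin m), x i T) * U i := by rw [sum_mul]
        _ ≤ 1 * U i := mul_le_mul_of_nonneg_right (hxle i) (hU0 i)
        _ = U i := one_mul _
    calc (1/α) * (∑ T : Finset (Fin m), x i T * (v i T - ∑ j ∈ T, p (Y j)))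
        ≤ (1/α) * U i := mul_le_mul_of_nonneg_left h1 hαinv.le
      _ ≤ 1 * U i := mul_le_mul_of_nonneg_right hαinv1 (hU0 i)
      _ = U i := one_mul _
  -- revenue rewriting
  have hR : ∑ i, (∑ j ∈ S i, p (soldCount S j i)) = ∑ j, ∑ y ∈ range (Y j), p y := by
    have h1 : ∀ i : Fin n, ∑ j ∈ S i, p (soldCount S j i)
        = ∑ j : Fin m, (if j ∈ S i then p (soldCount S j i) else 0) := by
      intro i
      rw [sum_ite_mem, univ_inter]
    simp_rw [h1]
    rw [sum_comm]
    exact sum_congr rfl fun j _ => revenue_item S p j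
  -- welfare split
  have hW : ∑ i, v i (S i) = ∑ i, U i + ∑ j, ∑ y ∈ range (Y j), p y := by
    rw [← hR, ← sum_add_distrib]
    exact sum_congr rfl fun i _ => by simp [hUdef]
  -- telescoping bound per item
  have hD : (∑ j, ∑ y ∈ range (Y j), p y) - ∑ j, f ((Y j : ℝ)) ≥
      (1/α) * ((∑ j, conj f (p (Y j))) - (m:ℝ) * conj f (p 0)) := by
    have hsum : ∑ j : Fin m, ((1/α) * (conj f (p (Y j)) - conj f (p 0)))
        ≤ ∑ j : Fin m, (∑ y ∈ range (Y j), p y - f ((Y j : ℝ))) :=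
      sum_le_sum fun j _ => telescope_ineq f α p hf0 hkey (Y j)
    have e1 : ∑ j : Fin m, ((1/α) * (conj f (p (Y j)) - conj f (p 0)))
        = (1/α) * ((∑ j, conj f (p (Y j))) - (m:ℝ) * conj f (p 0)) := by
      rw [← mul_sum, sum_sub_distrib, sum_const, card_univ, Fintype.card_fin,
        nsmul_eq_mul]
    have e2 : ∑ j : Fin m, (∑ y ∈ range (Y j), p y - f ((Y j : ℝ)))
        = (∑ j, ∑ y ∈ range (Y j), p y) - ∑ j, f ((Y j : ℝ)) := sum_sub_distrib _ _
    rw [e1, e2] at hsum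
    exact hsum
  -- Fenchel inequality per item
  have hE : ∀ j, q j * p (Y j) ≤ conj f (p (Y j)) + f (q j) := by
    intro j
    have h1 : p (Y j) * q j - f (q j) ≤ conj f (p (Y j)) :=
      le_csSup (hbdd (Y j)) ⟨q j, Set.mem_Ici.mpr (hq0 j), rfl⟩
    calc q j * p (Y j) = p (Y j) * q j := mul_comm _ _
      _ ≤ conj f (p (Y j)) + f (q j) := by linarith
  have hEsum : ∑ j, q j * p (Y j) ≤ (∑ j, conj f (p (Y j))) + ∑ j, f (q j) := by
    calc ∑ j, q j * p (Y j) ≤ ∑ j, (conj f (p (Y j)) + f (q j)) :=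
          sum_le_sum fun j _ => hE j
      _ = (∑ j, conj f (p (Y j))) + ∑ j, f (q j) := sum_add_distrib
  have hE' : (1/α) * (∑ j, q j * p (Y j))
      ≤ (1/α) * ((∑ j, conj f (p (Y j))) + ∑ j, f (q j)) :=
    mul_le_mul_of_nonneg_left hEsum hαinv.le
  -- sum rearrangement for the fractional allocation
  have hswap : ∀ i : Fin n,
      ∑ T : Finset (Fin m), x i T * (∑ j ∈ T, p (Y j))
        = ∑ j : Fin m,
            (∑ T ∈ Finset.univ.filter (fun T : Finset (Fin m) => j ∈ T), x i T) * p (Y j) := by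
    intro i
    simp_rw [sum_filter, sum_mul, ite_mul, zero_mul]
    rw [sum_comm]
    refine sum_congr rfl fun T _ => ?_
    rw [mul_sum, sum_ite_mem, univ_inter]
  have h4 : ∑ i, (∑ T : Finset (Fin m), x i T * (v i T - ∑ j ∈ T, p (Y j)))
      = (∑ i, ∑ T : Finset (Fin m), v i T * x i T) - ∑ j, q j * p (Y j) := by
    have h5 : ∀ i : Fin n, ∑ T : Finset (Fin m), x i T * (v i T - ∑ j ∈ T, p (Y j))
        = (∑ T : Finset (Fin m), v i T * x i T)
          - ∑ j : Fin m,
              (∑ T ∈ Finset.univ.filter (fun T : Finset (Fin m) => j ∈ T), x i T) * p (Y j) := by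
      intro i
      rw [← hswap i, ← sum_sub_distrib]
      exact sum_congr rfl fun T _ => by ring
    simp_rw [h5]
    rw [sum_sub_distrib]
    congr 1
    rw [sum_comm]
    refine sum_congr rfl fun j _ => ?_
    rw [hqdef]
    rw [sum_mul]
  have hUsum : ∑ i, U i ≥
      (1/α) * ((∑ i, ∑ T : Finset (Fin m), v i T * x i T) - ∑ j, q j * p (Y j)) := by
    have h2 : ∑ i, ((1/α) * (∑ T : Finset (Fin m), x i T * (v i T - ∑ j ∈ T, p (Y j))))
        ≤ ∑ i, U i := sum_le_sum fun i _ => hUi i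
    rw [← mul_sum, h4] at h2
    exact h2
  -- put it all together
  ring_nf at hW hUsum hD hE' ⊢
  linarith [hW, hUsum, hD, hE']
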